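/- In the sequent calculus LSkG, the context cut rule ccut is admissible: given derivations of - | Γ ⊢ A and S | Δ₀,A,Δ₁ ⊢ C, there is a derivation of S | Δ₀,Γ,Δ₁ ⊢ C. -/
import Mathlib


/-- Formulae of left skew monoidal closed logic: atoms, unit I, ⊗, ⊸. -/
inductive Fma : Type
  | atom : ℕ → Fma
  | I : Fma
  | tens : Fma → Fma → Fma
  | lolli : Fma → Fma → Fma

/-- Derivability in the stoup sequent calculus LSkG: `GDer S Γ A` means `S | Γ ⊢ A`. -/
inductive GDer : Option Fma → List Fma → Fma → Prop
  | ax {A} : GDer (some A) [] A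
  | lolliL {A B C Γ Δ} : GDer none Γ A → GDer (some B) Δ C →
      GDer (some (Fma.lolli A B)) (Γ ++ Δ) C
  | IL {Γ C} : GDer none Γ C → GDer (some Fma.I) Γ C
  | tensL {A B Γ C} : GDer (some A) (B :: Γ) C → GDer (some (Fma.tens A B)) Γ C
  | pass {A Γ C} : GDer (some A) Γ C → GDer none (A :: Γ) C
  | lolliR {S Γ A B} : GDer S (Γ ++ [A]) B → GDer S Γ (Fma.lolli A B)
  | IR : GDer none [] Fma.I
  | tensR {S Γ Δ A B} : GDer S Γ A → GDer none Δ B → GDer S (Γ ++ Δ) (Fma.tens A B)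

/-- Admissibility of the stoup cut for cut formula `A`. -/
def SCut (A : Fma) : Prop :=
  ∀ S Γ Δ C, GDer S Γ A → GDer (some A) Δ C → GDer S (Γ ++ Δ) C

/-- Admissibility of the context cut for cut formula `A`. -/
def CCut (A : Fma) : Prop :=
  ∀ S Γ Δ₀ Δ₁ C, GDer none Γ A → GDer S (Δ₀ ++ A :: Δ₁) C → GDer S (Δ₀ ++ Γ ++ Δ₁) C

lemma splitCtx {α} {A : α} {Γ' Δ' Δ₀ Δ₁ : List α} (h : Γ' ++ Δ' = Δ₀ ++ A :: Δ₁) :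
    (∃ t, Γ' = Δ₀ ++ A :: t ∧ Δ₁ = t ++ Δ') ∨ (∃ t, Δ₀ = Γ' ++ t ∧ Δ' = t ++ A :: Δ₁) := by
  rcases List.append_eq_append_iff.mp h with ⟨t, h1, h2⟩ | ⟨t, h1, h2⟩
  · exact Or.inr ⟨t, h1, h2⟩
  · cases t with
    | nil =>
      simp only [List.append_nil] at h1
      exact Or.inr ⟨[], by simp [h1], by simpa using h2.symm⟩
    | cons x t' =>
      injection h2 with hx ht
      subst hx
      exact Or.inl ⟨t', by simpa using h1, ht⟩

lemma ccut_of_scut {A : Fma} (hs : SCut A) : CCut A := by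
  intro S Γ Δ₀ Δ₁ C f g
  have key : ∀ {T E C'}, GDer T E C' → ∀ Δ₀ Δ₁, E = Δ₀ ++ A :: Δ₁ →
      GDer T (Δ₀ ++ Γ ++ Δ₁) C' := by
    intro T E C' g
    induction g with
    | ax => intro Δ₀ Δ₁ h; exact absurd h (by simp)
    | lolliL g₁ g₂ ih₁ ih₂ =>
      intro Δ₀ Δ₁ h
      rcases splitCtx h with ⟨t, h1, h2⟩ | ⟨t, h1, h2⟩
      · subst h1; subst h2
        have := GDer.lolliL (ih₁ Δ₀ t rfl) g₂
        simpa [List.append_assoc] using this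
      · subst h1; subst h2
        have := GDer.lolliL g₁ (ih₂ t Δ₁ rfl)
        simpa [List.append_assoc] using this
    | IL g' ih => intro Δ₀ Δ₁ h; exact GDer.IL (ih Δ₀ Δ₁ h)
    | tensL g' ih =>
      intro Δ₀ Δ₁ h
      exact GDer.tensL (ih (_ :: Δ₀) Δ₁ (by rw [h]; rfl))
    | pass g' ih =>
      intro Δ₀ Δ₁ h
      cases Δ₀ with
      | nil =>
        injection h with h1 h2; subst h1; subst h2
        exact hs none Γ _ _ f g'
      | cons B Δ₀' =>
        injection h with h1 h2; subst h1
        exact GDer.pass (ih Δ₀' Δ₁ h2)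
    | @lolliR T' E' X' B' g' ih =>
      intro Δ₀ Δ₁ h
      have := ih Δ₀ (Δ₁ ++ [X']) (by rw [h]; simp)
      exact GDer.lolliR (by simpa [List.append_assoc] using this)
    | IR => intro Δ₀ Δ₁ h; exact absurd h (by simp)
    | tensR g₁ g₂ ih₁ ih₂ =>
      intro Δ₀ Δ₁ h
      rcases splitCtx h with ⟨t, h1, h2⟩ | ⟨t, h1, h2⟩
      · subst h1; subst h2
        have := GDer.tensR (ih₁ Δ₀ t rfl) g₂
        simpa [List.append_assoc] using this
      · subst h1; subst h2
        have := GDer.tensR g₁ (ih₂ t Δ₁ rfl)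
        simpa [List.append_assoc] using this
  exact key g Δ₀ Δ₁ rfl

lemma IR_cut : ∀ {T Δ C}, GDer T Δ C → T = some Fma.I → GDer none Δ C := by
  intro T Δ C g
  induction g with
  | ax => intro h; injection h with h; subst h; exact GDer.IR
  | IL g' _ => intro _; exact g'
  | lolliL g₁ g₂ ih₁ ih₂ => intro h; simp at h
  | tensL g' ih => intro h; simp at h
  | pass g' ih => intro h; simp at h
  | lolliR g' ih => intro h; exact GDer.lolliR (ih h)
  | IR => intro h; simp at h
  | tensR g₁ g₂ ih₁ _ => intro h; exact GDer.tensR (ih₁ h) g₂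

lemma lolliR_cut {X B : Fma} (hB : SCut B) (hX : CCut X) {S Γ}
    (f' : GDer S (Γ ++ [X]) B) :
    ∀ {T Δ C}, GDer T Δ C → T = some (Fma.lolli X B) → GDer S (Γ ++ Δ) C := by
  intro T Δ C g
  induction g with
  | ax =>
    intro h; injection h with h; subst h
    simpa using GDer.lolliR f'
  | @lolliL X' B' C' Δa Δb g₁ g₂ _ _ =>
    intro h
    injection h with h
    injection h with h1 h2
    rw [h1] at g₁
    rw [h2] at g₂
    have h3 : GDer S (Γ ++ Δa ++ []) B := hX S Δa Γ [] B g₁ (by simpa using f')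
    have h4 : GDer S ((Γ ++ Δa) ++ Δb) C' := hB S (Γ ++ Δa) Δb C' (by simpa using h3) g₂
    simpa [List.append_assoc] using h4
  | IL => intro h; simp at h
  | tensL => intro h; simp at h
  | pass => intro h; simp at h
  | lolliR g' ih =>
    intro h
    exact GDer.lolliR (by rw [List.append_assoc]; exact ih h)
  | IR => intro h; simp at h
  | tensR g₁ g₂ ih₁ _ =>
    intro h
    rw [← List.append_assoc]
    exact GDer.tensR (ih₁ h) g₂

lemma tensR_cut {X B : Fma} (hX : SCut X) (hB : CCut B) {S Γ₁ Γ₂}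
    (f₁ : GDer S Γ₁ X) (f₂ : GDer none Γ₂ B) :
    ∀ {T Δ C}, GDer T Δ C → T = some (Fma.tens X B) → GDer S ((Γ₁ ++ Γ₂) ++ Δ) C := by
  intro T Δ C g
  induction g with
  | ax =>
    intro h; injection h with h; subst h
    simpa using GDer.tensR f₁ f₂
  | @tensL X' B' Δ' C' g' _ =>
    intro h
    injection h with h
    injection h with h1 h2
    rw [h1, h2] at g'
    have h3 : GDer (some X) ([] ++ Γ₂ ++ Δ') C' := hB (some X) Γ₂ [] Δ' C' f₂ g'
    have h4 : GDer S (Γ₁ ++ (Γ₂ ++ Δ')) C' := hX S Γ₁ (Γ₂ ++ Δ') C' f₁ (by simpa using h3)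
    simpa [List.append_assoc] using h4
  | lolliL => intro h; simp at h
  | IL => intro h; simp at h
  | pass => intro h; simp at h
  | lolliR g' ih =>
    intro h
    exact GDer.lolliR (by rw [List.append_assoc]; exact ih h)
  | IR => intro h; simp at h
  | tensR g₁ g₂ ih₁ _ =>
    intro h
    rw [← List.append_assoc]
    exact GDer.tensR (ih₁ h) g₂

lemma scut_of (A : Fma)
    (h1 : ∀ X B, A = Fma.lolli X B → SCut B ∧ CCut X)
    (h2 : ∀ X B, A = Fma.tens X B → SCut X ∧ CCut B) :
    SCut A := by
  have key : ∀ S Γ A0, GDer S Γ A0 → A0 = A → ∀ Δ C,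
      GDer (some A) Δ C → GDer S (Γ ++ Δ) C := by
    intro S Γ A0 f
    induction f with
    | ax => intro h Δ C g; subst h; simpa using g
    | lolliL f₁ f₂ _ ih₂ =>
      intro h Δ C g
      rw [List.append_assoc]
      exact GDer.lolliL f₁ (ih₂ h Δ C g)
    | IL f' ih => intro h Δ C g; exact GDer.IL (ih h Δ C g)
    | tensL f' ih => intro h Δ C g; exact GDer.tensL (ih h Δ C g)
    | pass f' ih => intro h Δ C g; exact GDer.pass (ih h Δ C g)
    | lolliR f' _ =>
      intro h Δ C g
      subst h
      obtain ⟨hB, hX⟩ := h1 _ _ rfl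
      exact lolliR_cut hB hX f' g rfl
    | IR =>
      intro h Δ C g
      subst h
      exact IR_cut g rfl
    | tensR f₁ f₂ _ _ =>
      intro h Δ C g
      subst h
      obtain ⟨hX, hB⟩ := h2 _ _ rfl
      exact tensR_cut hX hB f₁ f₂ g rfl
  intro S Γ Δ C f g
  exact key S Γ A f rfl Δ C g

lemma scut_all (A : Fma) : SCut A := by
  induction A with
  | atom n => exact scut_of _ (fun X B h => nomatch h) (fun X B h => nomatch h)
  | I => exact scut_of _ (fun X B h => nomatch h) (fun X B h => nomatch h)
  | tens X B ihX ihB =>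
    exact scut_of _ (fun _ _ h => nomatch h)
      (fun X' B' h => by cases h; exact ⟨ihX, ccut_of_scut ihB⟩)
  | lolli X B ihX ihB =>
    exact scut_of _ (fun X' B' h => by cases h; exact ⟨ihB, ccut_of_scut ihX⟩)
      (fun _ _ h => nomatch h)

/-- Admissibility of the context cut rule `ccut` in LSkG. -/
theorem ccut_admissible (S : Option Fma) (Γ Δ₀ Δ₁ : List Fma) (A C : Fma)
    (f : GDer none Γ A) (g : GDer S (Δ₀ ++ A :: Δ₁) C) :
    GDer S (Δ₀ ++ Γ ++ Δ₁) C := by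
  exact ccut_of_scut (scut_all A) S Γ Δ₀ Δ₁ C f g
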